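/- Suppose f(x) = (1/n) Σ_{i=1}^n f_i(x) is β-smooth and μ-PL with β ≥ μ > 0, each f_i is differentiable with ‖∇f_i(x)‖ ≤ σ for all i and x, and c ≥ n·ln(2)/r. Consider the iteration x_{t+1} = x_t - ((1-p)/β) ĝ(x_t), where ĝ(x) = g(x)/(1-p), g(x) = (1/n) Σ_{i=1}^{n/c} Y_i^{(t)} g[i](x), g[i](x) = Σ_{j=1}^c ∇f_{c(i-1)+j}(x), and at each iteration the block indicators Y^{(t)} are induced by an independent uniformly random r-subset of the k workers (partitioned into n/c blocks of size ℓ = kc/n, 2ℓ ≤ k). Then Δ_T := E[f(x_T) - f*] satisfies Δ_T ≤ (1 - (1-e^{-cr/n})μ/β)^T Δ_0 + 2c·e^{-cr/n}σ²/(μn). -/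

import Mathlib

open Finset

/-- The index `c*(i-1)+j` (0-indexed: `c*i + j`) of the `j`-th task in the `i`-th block. -/
def taskIdx (n c : ℕ) (hc : c ∣ n) (i : Fin (n / c)) (j : Fin c) : Fin n :=
  ⟨c * i.val + j.val, by
    calc c * i.val + j.val < c * i.val + c := Nat.add_lt_add_left j.isLt _
      _ = c * (i.val + 1) := (Nat.mul_succ c i.val).symm
      _ ≤ c * (n / c) := Nat.mul_le_mul (Nat.le_refl c) i.isLt
      _ = n := Nat.mul_div_cancel' hc⟩

/-- The trajectory obtained by starting at `x0` and, at step `t`, applying the update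
`upd (ω t)` determined by the non-straggler set `ω t` of that iteration. -/
def traj {k : ℕ} {E : Type*} (x0 : E) (upd : Finset (Fin k) → E → E)
    (ω : ℕ → Finset (Fin k)) : ℕ → E
  | 0 => x0
  | t + 1 => upd (ω t) (traj x0 upd ω t)


-- descFactorial ratio inequality
lemma descFactorial_mul_pow_le (k ℓ : ℕ) :
    ∀ r : ℕ, (k - ℓ).descFactorial r * k ^ r ≤ k.descFactorial r * (k - ℓ) ^ r := by
  intro r
  induction r with
  | zero => simp
  | succ r ih =>
    rw [Nat.descFactorial_succ, Nat.descFactorial_succ, pow_succ, pow_succ]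
    have key : (k - ℓ - r) * k ≤ (k - r) * (k - ℓ) := by
      rcases Nat.le_total k (ℓ + r) with h | h
      · have : k - ℓ - r = 0 := by omega
        simp [this]
      · have h1 : k - ℓ - r = k - (ℓ + r) := by omega
        zify [show ℓ + r ≤ k from h, show r ≤ k by omega, show ℓ ≤ k by omega, h1]
        nlinarith [Nat.zero_le ℓ, Nat.zero_le r]
    calc (k - ℓ - r) * (k - ℓ).descFactorial r * (k ^ r * k)
        = ((k - ℓ - r) * k) * ((k - ℓ).descFactorial r * k ^ r) := by ring
      _ ≤ ((k - r) * (k - ℓ)) * (k.descFactorial r * (k - ℓ) ^ r) :=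
          Nat.mul_le_mul key ih
      _ = (k - r) * k.descFactorial r * ((k - ℓ) ^ r * (k - ℓ)) := by ring

lemma choose_ratio_le_exp (k ℓ r : ℕ) (hk : 0 < k) (hr : r ≤ k) (hℓk : ℓ ≤ k) :
    ((k - ℓ).choose r : ℝ) / (k.choose r : ℝ) ≤ Real.exp (-((ℓ : ℝ) / k) * r) := by
  have hC : 0 < (k.choose r : ℝ) := by exact_mod_cast Nat.choose_pos hr
  have hkR : 0 < (k : ℝ) := by exact_mod_cast hk
  have hnat : (k - ℓ).choose r * k ^ r ≤ k.choose r * (k - ℓ) ^ r := by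
    have h := descFactorial_mul_pow_le k ℓ r
    rw [Nat.descFactorial_eq_factorial_mul_choose, Nat.descFactorial_eq_factorial_mul_choose,
      mul_assoc, mul_assoc] at h
    exact Nat.le_of_mul_le_mul_left h (Nat.factorial_pos r)
  have hR : ((k - ℓ).choose r : ℝ) * (k : ℝ) ^ r ≤ (k.choose r : ℝ) * ((k : ℝ) - ℓ) ^ r := by
    have := Nat.cast_le (α := ℝ) |>.2 hnat
    push_cast [Nat.cast_sub hℓk] at this
    convert this using 2
  have step1 : ((k - ℓ).choose r : ℝ) / (k.choose r : ℝ) ≤ (1 - (ℓ : ℝ) / k) ^ r := by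
    rw [div_le_iff₀ hC]
    have he : (1 - (ℓ : ℝ) / k) = ((k : ℝ) - ℓ) / k := by field_simp
    have hkpow : (0 : ℝ) < (k : ℝ) ^ r := pow_pos hkR r
    rw [he, div_pow, div_mul_eq_mul_div, le_div_iff₀ hkpow]
    nlinarith [hR]
  have step2 : (1 - (ℓ : ℝ) / k) ^ r ≤ Real.exp (-((ℓ : ℝ) / k) * r) := by
    have h1 : (0:ℝ) ≤ 1 - (ℓ : ℝ) / k := by
      rw [sub_nonneg, div_le_one hkR]; exact_mod_cast hℓk
    have h2 : 1 - (ℓ : ℝ) / k ≤ Real.exp (-((ℓ : ℝ) / k)) := by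
      linarith [Real.add_one_le_exp (-((ℓ : ℝ) / k))]
    calc (1 - (ℓ : ℝ) / k) ^ r ≤ Real.exp (-((ℓ : ℝ) / k)) ^ r := pow_le_pow_left₀ h1 h2 r
      _ = Real.exp (-((ℓ : ℝ) / k) * r) := by
          rw [← Real.exp_nat_mul]; ring_nf
  linarith

lemma count_disjoint {k : ℕ} (r : ℕ) (U : Finset (Fin k)) :
    ((powersetCard r (univ : Finset (Fin k))).filter (fun s => Disjoint s U)).card
      = (k - U.card).choose r := by
  have he : (powersetCard r (univ : Finset (Fin k))).filter (fun s => Disjoint s U)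
      = powersetCard r Uᶜ := by
    ext s
    simp only [mem_filter, mem_powersetCard, subset_univ, true_and]
    constructor
    · rintro ⟨h1, h2⟩
      exact ⟨fun a ha => Finset.mem_compl.2 fun hU => (Finset.disjoint_left.1 h2) ha hU, h1⟩
    · rintro ⟨h1, h2⟩
      refine ⟨h2, Finset.disjoint_left.2 fun a ha hU => ?_⟩
      exact (Finset.mem_compl.1 (h1 ha)) hU
  rw [he, card_powersetCard, card_compl, Fintype.card_fin]

lemma gradient_avg_sum {d n : ℕ} (f : Fin n → EuclideanSpace ℝ (Fin d) → ℝ)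
    (hdiff : ∀ i, Differentiable ℝ (f i)) (x : EuclideanSpace ℝ (Fin d)) :
    gradient (fun y => (1 / (n : ℝ)) * ∑ i, f i y) x
      = (1 / (n : ℝ)) • ∑ i, gradient (f i) x := by
  have hsum : HasFDerivAt (fun y => ∑ i, f i y) (∑ i, fderiv ℝ (f i) x) x :=
    HasFDerivAt.fun_sum fun i _ => (hdiff i x).hasFDerivAt
  have hF : HasFDerivAt (fun y => (1 / (n : ℝ)) * ∑ i, f i y)
      ((1 / (n : ℝ)) • ∑ i, fderiv ℝ (f i) x) x := hsum.const_mul _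
  have := hF.hasGradientAt.gradient
  rw [this, map_smul, map_sum]
  rfl

-- inner expansion of squared norm of a weighted sum
lemma norm_weighted_sum_sq {d m : ℕ} (a : Fin m → ℝ) (G : Fin m → EuclideanSpace ℝ (Fin d)) :
    ‖∑ i, a i • G i‖ ^ 2 = ∑ i, ∑ j, a i * a j * (inner ℝ (G i) (G j) : ℝ) := by
  rw [← real_inner_self_eq_norm_sq, sum_inner]
  refine Finset.sum_congr rfl fun i _ => ?_
  rw [inner_sum]
  refine Finset.sum_congr rfl fun j _ => ?_
  rw [real_inner_smul_left, real_inner_smul_right]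
  ring

def stepSum {k : ℕ} {E : Type*} (Ω : Finset (Finset (Fin k)))
    (upd : Finset (Fin k) → E → E) (φ : E → ℝ) : ℕ → E → ℝ
  | 0, x => φ x
  | t + 1, x => ∑ s ∈ Ω, stepSum Ω upd φ t (upd s x)

lemma traj_shift {k : ℕ} {E : Type*} (x0 : E) (upd : Finset (Fin k) → E → E)
    (ω : ℕ → Finset (Fin k)) : ∀ t, traj x0 upd ω (t + 1)
      = traj (upd (ω 0) x0) upd (fun i => ω (i + 1)) t := by
  intro t
  induction t with
  | zero => rfl
  | succ t ih => show upd (ω (t+1)) (traj x0 upd ω (t+1)) = _; rw [ih]; rfl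

lemma sum_piFinset_traj {k : ℕ} {E : Type*} (Ω : Finset (Finset (Fin k)))
    (upd : Finset (Fin k) → E → E) (φ : E → ℝ) :
    ∀ (T : ℕ) (x : E), ∑ ω ∈ Fintype.piFinset (fun _ : Fin T => Ω),
        φ (traj x upd (fun t => if h : t < T then ω ⟨t, h⟩ else ∅) T)
      = stepSum Ω upd φ T x := by
  intro T
  induction T with
  | zero => intro x; simp [stepSum, traj]
  | succ T ih =>
    intro x
    have hsplit : (Fintype.piFinset (fun _ : Fin (T+1) => Ω))
        = (Ω ×ˢ Fintype.piFinset (fun _ : Fin T => Ω)).map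
            (Fin.consEquiv (fun _ : Fin (T+1) => Finset (Fin k))).toEmbedding := by
      have := Finset.filter_piFinset_eq_map_consEquiv
        (fun _ : Fin (T+1) => Ω) (fun _ => True)
      simp at this; exact this
    rw [hsplit, Finset.sum_map, Finset.sum_product]
    show (∑ s ∈ Ω, ∑ ω ∈ Fintype.piFinset (fun _ : Fin T => Ω),
        φ (traj x upd (fun t => if h : t < T + 1 then (Fin.cons s ω : Fin (T+1) → Finset (Fin k)) ⟨t, h⟩ else ∅) (T+1))) = _
    show _ = ∑ s ∈ Ω, stepSum Ω upd φ T (upd s x)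
    refine Finset.sum_congr rfl fun s _ => ?_
    rw [← ih (upd s x)]
    refine Finset.sum_congr rfl fun ω _ => ?_
    congr 1
    rw [traj_shift]
    congr 1
    · funext i
      by_cases h : i < T
      · simp only [dif_pos (by omega : i + 1 < T + 1), dif_pos h]
        have : (⟨i + 1, by omega⟩ : Fin (T+1)) = Fin.succ ⟨i, h⟩ := rfl
        rw [this, Fin.cons_succ]
      · rw [dif_neg (by omega), dif_neg h]

lemma stepSum_le {k : ℕ} {E : Type*} (Ω : Finset (Finset (Fin k)))
    (upd : Finset (Fin k) → E → E) (D : E → ℝ) (ρ ns : ℝ)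
    (hρ : 0 ≤ ρ) (hns : 0 ≤ ns)
    (hstep : ∀ x, ∑ s ∈ Ω, D (upd s x) ≤ (Ω.card : ℝ) * ρ * D x + (Ω.card : ℝ) * ns) :
    ∀ (t : ℕ) (x : E), stepSum Ω upd D t x
      ≤ (Ω.card : ℝ) ^ t * (ρ ^ t * D x + ns * ∑ i ∈ Finset.range t, ρ ^ i) := by
  intro t
  induction t with
  | zero => intro x; simp [stepSum]
  | succ t ih =>
    intro x
    have hN : (0 : ℝ) ≤ (Ω.card : ℝ) := Nat.cast_nonneg _
    calc stepSum Ω upd D (t+1) x = ∑ s ∈ Ω, stepSum Ω upd D t (upd s x) := rfl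
      _ ≤ ∑ s ∈ Ω, (Ω.card : ℝ) ^ t * (ρ ^ t * D (upd s x) + ns * ∑ i ∈ Finset.range t, ρ ^ i) :=
          Finset.sum_le_sum fun s _ => ih (upd s x)
      _ = (Ω.card : ℝ) ^ t * ρ ^ t * (∑ s ∈ Ω, D (upd s x))
          + (Ω.card : ℝ) * ((Ω.card : ℝ) ^ t * (ns * ∑ i ∈ Finset.range t, ρ ^ i)) := by
          rw [Finset.sum_congr rfl (fun s _ => mul_add ((Ω.card:ℝ)^t) (ρ ^ t * D (upd s x)) _),
            Finset.sum_add_distrib, Finset.sum_const, nsmul_eq_mul, ← Finset.mul_sum,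
            ← Finset.mul_sum]
          ring
      _ ≤ (Ω.card : ℝ) ^ t * ρ ^ t * ((Ω.card : ℝ) * ρ * D x + (Ω.card : ℝ) * ns)
          + (Ω.card : ℝ) * ((Ω.card : ℝ) ^ t * (ns * ∑ i ∈ Finset.range t, ρ ^ i)) := by
          have := hstep x
          have h1 : (0:ℝ) ≤ (Ω.card : ℝ) ^ t * ρ ^ t := by positivity
          nlinarith
      _ = (Ω.card : ℝ) ^ (t+1) * (ρ ^ (t+1) * D x + ns * ∑ i ∈ Finset.range (t+1), ρ ^ i) := by
          rw [Finset.sum_range_succ]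
          ring

section Core
variable {d n k c r ℓ : ℕ}

set_option maxHeartbeats 1000000 in
lemma core_step (hn : 0 < n) (hc : c ∣ n) (hrpos : 0 < r) (hr : r ≤ k)
    (hℓ : n * ℓ = k * c) (h2ℓ : 2 * ℓ ≤ k)
    (W : Fin (n / c) → Finset (Fin k))
    (hWcard : ∀ i, (W i).card = ℓ)
    (hWdisj : ∀ i j, i ≠ j → Disjoint (W i) (W j))
    (f : Fin n → EuclideanSpace ℝ (Fin d) → ℝ)
    (hdiff : ∀ i, Differentiable ℝ (f i))
    (σ β μ fstar : ℝ) (hμ : 0 < μ) (hβμ : μ ≤ β)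
    (hσ : ∀ i x, ‖gradient (f i) x‖ ≤ σ)
    (F : EuclideanSpace ℝ (Fin d) → ℝ)
    (hF : F = fun y => (1 / (n : ℝ)) * ∑ i, f i y)
    (hsmooth : ∀ x y, F y ≤ F x + inner ℝ (gradient F x) (y - x) + (β / 2) * ‖y - x‖ ^ 2)
    (hmin : ∀ x, fstar ≤ F x)
    (hPL : ∀ x, μ * (F x - fstar) ≤ (1 / 2) * ‖gradient F x‖ ^ 2)
    (x : EuclideanSpace ℝ (Fin d)) :
    ∑ s ∈ powersetCard r (univ : Finset (Fin k)),
      F (x - β⁻¹ • ((1 / (n : ℝ)) • ∑ i : Fin (n / c),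
        (if (s ∩ W i).Nonempty then (1 : ℝ) else 0) •
          ∑ j : Fin c, gradient (f (taskIdx n c hc i j)) x))
    ≤ (k.choose r : ℝ) * F x
      - ((k.choose r : ℝ) - ((k - ℓ).choose r : ℝ)) * (μ / β) * (F x - fstar)
      + ((k - ℓ).choose r : ℝ) * c * σ ^ 2 / (2 * β * n) := by
  -- basic positivity
  have hβ : 0 < β := lt_of_lt_of_le hμ hβμ
  have hk : 0 < k := lt_of_lt_of_le hrpos hr
  have hcpos : 0 < c := Nat.pos_of_dvd_of_pos hc hn
  have hnR : (0:ℝ) < n := by exact_mod_cast hn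
  have hσ0 : 0 ≤ σ := le_trans (norm_nonneg _) (hσ ⟨0, hn⟩ x)
  set Ω := powersetCard r (univ : Finset (Fin k)) with hΩ
  have hΩcard : Ω.card = k.choose r := by
    rw [hΩ, card_powersetCard, card_univ, Fintype.card_fin]
  set N := (k.choose r : ℝ)
  set M₁ := ((k - ℓ).choose r : ℝ)
  set M₂ := ((k - 2*ℓ).choose r : ℝ)
  set G : Fin (n / c) → EuclideanSpace ℝ (Fin d) :=
    fun i => ∑ j : Fin c, gradient (f (taskIdx n c hc i j)) x with hG
  set ind : Finset (Fin k) → Fin (n / c) → ℝ :=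
    fun s i => if (s ∩ W i).Nonempty then (1 : ℝ) else 0 with hind
  set v := gradient F x with hv
  -- counting: sum of (1 - ind)
  have hdisj_count : ∀ (U : Finset (Fin k)),
      ∑ s ∈ Ω, (if Disjoint s U then (1:ℝ) else 0) = ((k - U.card).choose r : ℝ) := by
    intro U
    rw [Finset.sum_boole, count_disjoint r U]
  have hind_eq : ∀ s i, ind s i = 1 - (if Disjoint s (W i) then (1:ℝ) else 0) := by
    intro s i
    show (if (s ∩ W i).Nonempty then (1:ℝ) else 0) = _
    by_cases h : (s ∩ W i).Nonempty
    · rw [if_pos h, if_neg (by rwa [Finset.disjoint_iff_inter_eq_empty,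
        ← Finset.not_nonempty_iff_eq_empty, not_not])]
      ring
    · rw [if_neg h, if_pos (by rwa [Finset.disjoint_iff_inter_eq_empty,
        ← Finset.not_nonempty_iff_eq_empty])]
      ring
  have hsum_ind : ∀ i, ∑ s ∈ Ω, ind s i = N - M₁ := by
    intro i
    calc ∑ s ∈ Ω, ind s i = ∑ s ∈ Ω, (1 - (if Disjoint s (W i) then (1:ℝ) else 0)) :=
        Finset.sum_congr rfl fun s _ => hind_eq s i
      _ = (Ω.card : ℝ) - ((k - (W i).card).choose r : ℝ) := by
        rw [Finset.sum_sub_distrib, Finset.sum_const, nsmul_eq_mul, mul_one, hdisj_count]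
      _ = N - M₁ := by rw [hΩcard, hWcard]
  have hsum_ind2 : ∀ i j, i ≠ j → ∑ s ∈ Ω, ind s i * ind s j = N - 2*M₁ + M₂ := by
    intro i j hij
    have key : ∀ s, ind s i * ind s j
        = 1 - (if Disjoint s (W i) then (1:ℝ) else 0)
            - (if Disjoint s (W j) then (1:ℝ) else 0)
            + (if Disjoint s (W i ∪ W j) then (1:ℝ) else 0) := by
      intro s
      rw [hind_eq s i, hind_eq s j]
      have : (if Disjoint s (W i ∪ W j) then (1:ℝ) else 0)
          = (if Disjoint s (W i) then (1:ℝ) else 0) * (if Disjoint s (W j) then (1:ℝ) else 0) := by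
        by_cases h1 : Disjoint s (W i) <;> by_cases h2 : Disjoint s (W j) <;>
          simp [Finset.disjoint_union_right, h1, h2]
      rw [this]
      ring
    have hcardU : (W i ∪ W j).card = 2 * ℓ := by
      rw [Finset.card_union_of_disjoint (hWdisj i j hij), hWcard, hWcard]; ring
    calc ∑ s ∈ Ω, ind s i * ind s j
        = ∑ s ∈ Ω, (1 - (if Disjoint s (W i) then (1:ℝ) else 0)
            - (if Disjoint s (W j) then (1:ℝ) else 0)
            + (if Disjoint s (W i ∪ W j) then (1:ℝ) else 0)) :=
          Finset.sum_congr rfl fun s _ => key s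
      _ = N - 2*M₁ + M₂ := by
        rw [Finset.sum_add_distrib, Finset.sum_sub_distrib, Finset.sum_sub_distrib,
          Finset.sum_const, nsmul_eq_mul, mul_one, hdisj_count, hdisj_count, hdisj_count,
          hΩcard, hWcard, hWcard, hcardU]
        ring
  -- gradient identities
  have hgradF : v = (1 / (n : ℝ)) • ∑ t, gradient (f t) x := by
    rw [hv, hF]; exact gradient_avg_sum f hdiff x
  have hbij : ∑ t : Fin n, gradient (f t) x = ∑ i, G i := by
    have hcard : Fintype.card (Fin (n / c) × Fin c) = Fintype.card (Fin n) := by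
      simp [Nat.div_mul_cancel hc]
    have hinj : Function.Injective
        (fun q : Fin (n / c) × Fin c => taskIdx n c hc q.1 q.2) := by
      rintro ⟨i1, j1⟩ ⟨i2, j2⟩ h
      have h' : c * i1.val + j1.val = c * i2.val + j2.val := congrArg Fin.val h
      have hi : i1.val = i2.val := by
        have e1 : (c * i1.val + j1.val) / c = i1.val := by
          rw [Nat.mul_add_div hcpos, Nat.div_eq_of_lt j1.isLt]; ring
        have e2 : (c * i2.val + j2.val) / c = i2.val := by
          rw [Nat.mul_add_div hcpos, Nat.div_eq_of_lt j2.isLt]; ring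
        rw [← e1, ← e2, h']
      have hj : j1.val = j2.val := by rw [hi] at h'; omega
      simp [Prod.ext_iff, Fin.ext_iff, hi, hj]
    have hbijective : Function.Bijective
        (fun q : Fin (n / c) × Fin c => taskIdx n c hc q.1 q.2) :=
      (Fintype.bijective_iff_injective_and_card _).2 ⟨hinj, hcard⟩
    calc ∑ t : Fin n, gradient (f t) x
        = ∑ q : Fin (n / c) × Fin c, gradient (f (taskIdx n c hc q.1 q.2)) x :=
          (Fintype.sum_bijective _ hbijective
            (fun q : Fin (n / c) × Fin c => gradient (f (taskIdx n c hc q.1 q.2)) x)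
            (fun t => gradient (f t) x) (fun q => rfl)).symm
      _ = ∑ i, ∑ j, gradient (f (taskIdx n c hc i j)) x :=
          Fintype.sum_prod_type (f := fun q : Fin (n / c) × Fin c => gradient (f (taskIdx n c hc q.1 q.2)) x)
      _ = ∑ i, G i := rfl
  have hsumG : ∑ i, G i = (n : ℝ) • v := by
    rw [hgradF, smul_smul, mul_one_div, div_self hnR.ne', one_smul, hbij]
  have hGnorm : ∀ i, ‖G i‖ ≤ c * σ := by
    intro i
    calc ‖G i‖ ≤ ∑ j : Fin c, ‖gradient (f (taskIdx n c hc i j)) x‖ := norm_sum_le _ _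
      _ ≤ ∑ _j : Fin c, σ := Finset.sum_le_sum fun j _ => hσ _ x
      _ = c * σ := by rw [Finset.sum_const, card_univ, Fintype.card_fin, nsmul_eq_mul]
  have hmc : ((n / c : ℕ) : ℝ) * (c : ℝ) = (n : ℝ) := by
    exact_mod_cast congrArg (Nat.cast : ℕ → ℝ) (Nat.div_mul_cancel hc)
  have hS2 : ∑ i, ‖G i‖ ^ 2 ≤ (n : ℝ) * c * σ ^ 2 := by
    calc ∑ i, ‖G i‖ ^ 2 ≤ ∑ _i : Fin (n / c), ((c : ℝ) * σ) ^ 2 :=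
        Finset.sum_le_sum fun i _ => pow_le_pow_left₀ (norm_nonneg _) (hGnorm i) 2
      _ = ((n / c : ℕ) : ℝ) * ((c : ℝ) * σ) ^ 2 := by
        rw [Finset.sum_const, card_univ, Fintype.card_fin, nsmul_eq_mul]
      _ = ((n / c : ℕ) : ℝ) * (c : ℝ) * (c : ℝ) * σ ^ 2 := by ring
      _ = (n : ℝ) * c * σ ^ 2 := by rw [hmc]
  set gv : Finset (Fin k) → EuclideanSpace ℝ (Fin d) :=
    fun s => (1 / (n : ℝ)) • ∑ i, ind s i • G i with hgv
  -- smoothness applied pointwise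
  have hsmooth' : ∀ s ∈ Ω, F (x - β⁻¹ • gv s)
      ≤ F x - β⁻¹ * (inner ℝ v (gv s) : ℝ) + 1 / (2 * β) * ‖gv s‖ ^ 2 := by
    intro s _
    have h0 := hsmooth x (x - β⁻¹ • gv s)
    have h1 : (x - β⁻¹ • gv s) - x = -(β⁻¹ • gv s) := by abel
    rw [h1, inner_neg_right, real_inner_smul_right, norm_neg, norm_smul,
      Real.norm_eq_abs, abs_of_pos (inv_pos.2 hβ)] at h0
    have h2 : β / 2 * (β⁻¹ * ‖gv s‖) ^ 2 = 1 / (2 * β) * ‖gv s‖ ^ 2 := by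
      field_simp
    rw [h2] at h0
    linarith [h0]
  -- sum of the gradient estimates
  have hsum_g : ∑ s ∈ Ω, gv s = (N - M₁) • v := by
    calc ∑ s ∈ Ω, gv s
        = (1 / (n : ℝ)) • ∑ s ∈ Ω, ∑ i, ind s i • G i := by
          rw [Finset.smul_sum]
      _ = (1 / (n : ℝ)) • ∑ i, (∑ s ∈ Ω, ind s i) • G i := by
          rw [Finset.sum_comm]
          congr 1
          exact Finset.sum_congr rfl fun i _ => (Finset.sum_smul).symm
      _ = (1 / (n : ℝ)) • ∑ i, (N - M₁) • G i := by
          congr 1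
          exact Finset.sum_congr rfl fun i _ => by rw [hsum_ind i]
      _ = ((N - M₁) * (1 / n)) • ∑ i, G i := by
          rw [← Finset.smul_sum, smul_smul, mul_comm]
      _ = ((N - M₁) * (1 / n) * n) • v := by rw [hsumG, smul_smul]
      _ = (N - M₁) • v := by
          congr 1
          field_simp
  have hsum_inner : ∑ s ∈ Ω, (inner ℝ v (gv s) : ℝ) = (N - M₁) * ‖v‖ ^ 2 := by
    rw [← inner_sum, hsum_g, real_inner_smul_right, real_inner_self_eq_norm_sq]
  -- sum of squared norms
  have hKij : ∀ i j : Fin (n / c), ∑ s ∈ Ω, ind s i * ind s j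
      = (N - 2*M₁ + M₂) + (if i = j then M₁ - M₂ else 0) := by
    intro i j
    by_cases h : i = j
    · subst h
      rw [if_pos rfl]
      have : ∀ s, ind s i * ind s i = ind s i := by
        intro s
        show (if (s ∩ W i).Nonempty then (1:ℝ) else 0)
            * (if (s ∩ W i).Nonempty then (1:ℝ) else 0)
          = (if (s ∩ W i).Nonempty then (1:ℝ) else 0)
        split_ifs <;> ring
      rw [Finset.sum_congr rfl fun s _ => this s, hsum_ind i]
      ring
    · rw [if_neg h, hsum_ind2 i j h]
      ring
  have hdouble : ∑ i, ∑ j, (inner ℝ (G i) (G j) : ℝ) = ‖∑ i, G i‖ ^ 2 := by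
    have := norm_weighted_sum_sq (fun _ : Fin (n / c) => (1:ℝ)) G
    simpa using this.symm
  have hsum_normsq : ∑ s ∈ Ω, ‖gv s‖ ^ 2
      = (1 / (n : ℝ)) ^ 2 * ((N - 2*M₁ + M₂) * ‖∑ i, G i‖ ^ 2
          + (M₁ - M₂) * ∑ i, ‖G i‖ ^ 2) := by
    have h1 : ∀ s, ‖gv s‖ ^ 2
        = (1 / (n : ℝ)) ^ 2 * ∑ i, ∑ j, ind s i * ind s j * (inner ℝ (G i) (G j) : ℝ) := by
      intro s
      rw [hgv]
      show ‖(1 / (n : ℝ)) • ∑ i, ind s i • G i‖ ^ 2 = _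
      rw [norm_smul, mul_pow, Real.norm_eq_abs, abs_of_pos (by positivity : (0:ℝ) < 1 / n),
        norm_weighted_sum_sq]
    rw [Finset.sum_congr rfl fun s _ => h1 s, ← Finset.mul_sum]
    congr 1
    calc ∑ s ∈ Ω, ∑ i, ∑ j, ind s i * ind s j * (inner ℝ (G i) (G j) : ℝ)
        = ∑ i, ∑ s ∈ Ω, ∑ j, ind s i * ind s j * (inner ℝ (G i) (G j) : ℝ) := Finset.sum_comm
      _ = ∑ i, ∑ j, ∑ s ∈ Ω, ind s i * ind s j * (inner ℝ (G i) (G j) : ℝ) :=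
          Finset.sum_congr rfl fun i _ => Finset.sum_comm
      _ = ∑ i, ∑ j, ((N - 2*M₁ + M₂) + (if i = j then M₁ - M₂ else 0))
            * (inner ℝ (G i) (G j) : ℝ) := by
          refine Finset.sum_congr rfl fun i _ => Finset.sum_congr rfl fun j _ => ?_
          rw [← Finset.sum_mul, hKij i j]
      _ = (N - 2*M₁ + M₂) * ∑ i, ∑ j, (inner ℝ (G i) (G j) : ℝ)
            + ∑ i, ∑ j, (if i = j then M₁ - M₂ else 0) * (inner ℝ (G i) (G j) : ℝ) := by
          rw [Finset.mul_sum]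
          rw [← Finset.sum_add_distrib]
          refine Finset.sum_congr rfl fun i _ => ?_
          rw [Finset.mul_sum, ← Finset.sum_add_distrib]
          refine Finset.sum_congr rfl fun j _ => ?_
          ring
      _ = (N - 2*M₁ + M₂) * ‖∑ i, G i‖ ^ 2 + (M₁ - M₂) * ∑ i, ‖G i‖ ^ 2 := by
          rw [hdouble]
          congr 1
          rw [Finset.mul_sum]
          refine Finset.sum_congr rfl fun i _ => ?_
          simp only [ite_mul, zero_mul]
          rw [Finset.sum_ite_eq univ i (fun j => (M₁ - M₂) * (inner ℝ (G i) (G j) : ℝ)),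
            if_pos (mem_univ i), real_inner_self_eq_norm_sq]
  -- assemble
  have hM21 : M₂ ≤ M₁ := by
    show ((k - 2*ℓ).choose r : ℝ) ≤ ((k - ℓ).choose r : ℝ)
    exact_mod_cast Nat.choose_le_choose r (by omega : k - 2*ℓ ≤ k - ℓ)
  have hM1N : M₁ ≤ N := by
    show ((k - ℓ).choose r : ℝ) ≤ (k.choose r : ℝ)
    exact_mod_cast Nat.choose_le_choose r (by omega : k - ℓ ≤ k)
  have hM20 : (0:ℝ) ≤ M₂ := Nat.cast_nonneg _
  have hM10 : (0:ℝ) ≤ M₁ := Nat.cast_nonneg _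
  have hnormSum : ‖∑ i, G i‖ ^ 2 = (n:ℝ)^2 * ‖v‖^2 := by
    rw [hsumG, norm_smul, mul_pow, Real.norm_eq_abs, abs_of_pos hnR]
  set T := ‖v‖^2 with hT
  have hT0 : 0 ≤ T := sq_nonneg _
  set S2 := ∑ i, ‖G i‖^2 with hS2d
  have hS20 : 0 ≤ S2 := Finset.sum_nonneg fun i _ => sq_nonneg _
  have hPLx : μ * (F x - fstar) ≤ 1/2 * T := hPL x
  have k1 : 1/(2*β) * ((N - 2*M₁ + M₂)*T) ≤ 1/(2*β) * ((N - M₁)*T) := by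
    have h1 : (0:ℝ) ≤ 1/(2*β) := by positivity
    exact mul_le_mul_of_nonneg_left
      (mul_le_mul_of_nonneg_right (by linarith : N - 2*M₁ + M₂ ≤ N - M₁) hT0) h1
  have k2 : (N - M₁)*(μ/β)*(F x - fstar) ≤ 1/(2*β) * ((N - M₁)*T) := by
    have hNM : (0:ℝ) ≤ N - M₁ := by linarith
    have key2 : (N - M₁)*(μ*(F x - fstar)) ≤ (N - M₁)*(1/2*T) :=
      mul_le_mul_of_nonneg_left hPLx hNM
    have h1β : (0:ℝ) ≤ 1/β := by positivity
    have := mul_le_mul_of_nonneg_left key2 h1β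
    have e21 : (N - M₁)*(μ/β)*(F x - fstar) = 1/β * ((N - M₁)*(μ*(F x - fstar))) := by
      field_simp
    have e22 : 1/(2*β) * ((N - M₁)*T) = 1/β * ((N - M₁)*(1/2*T)) := by
      rw [div_mul_eq_mul_div, div_mul_eq_mul_div,
        div_eq_div_iff (by positivity : (2:ℝ)*β ≠ 0) (by positivity : β ≠ 0)]
      ring
    linarith
  have k3 : 1/(2*β) * ((M₁ - M₂)*S2/(n:ℝ)^2) ≤ M₁ * c * σ^2 / (2*β*n) := by
    have key3 : (M₁ - M₂)*S2 ≤ M₁ * ((n:ℝ) * c * σ^2) := by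
      apply mul_le_mul (by linarith) hS2 hS20 hM10
    have e3 : M₁ * c * σ^2 / (2*β*n) = M₁ * ((n:ℝ) * c * σ^2) * (1/(2*β*(n:ℝ)^2)) := by
      field_simp
    have e4 : 1/(2*β) * ((M₁ - M₂)*S2/(n:ℝ)^2) = (M₁ - M₂)*S2 * (1/(2*β*(n:ℝ)^2)) := by
      field_simp
    rw [e3, e4]
    exact mul_le_mul_of_nonneg_right key3 (by positivity)
  have hbb : β⁻¹*((N - M₁)*T) = 2 * (1/(2*β)*((N - M₁)*T)) := by
    rw [inv_eq_one_div, div_mul_eq_mul_div, div_mul_eq_mul_div, ← mul_div_assoc,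
      div_eq_div_iff (by positivity : β ≠ 0) (by positivity : (2:ℝ)*β ≠ 0)]
    ring
  calc ∑ s ∈ powersetCard r (univ : Finset (Fin k)),
      F (x - β⁻¹ • ((1 / (n : ℝ)) • ∑ i : Fin (n / c),
        (if (s ∩ W i).Nonempty then (1 : ℝ) else 0) •
          ∑ j : Fin c, gradient (f (taskIdx n c hc i j)) x))
      = ∑ s ∈ Ω, F (x - β⁻¹ • gv s) := rfl
    _ ≤ ∑ s ∈ Ω, (F x - β⁻¹ * (inner ℝ v (gv s) : ℝ) + 1/(2*β) * ‖gv s‖^2) :=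
        Finset.sum_le_sum hsmooth'
    _ = N * F x - β⁻¹ * ((N - M₁) * T) + 1/(2*β) * ((1/(n:ℝ))^2 * ((N - 2*M₁ + M₂) * ((n:ℝ)^2 * T) + (M₁ - M₂) * S2)) := by
        rw [Finset.sum_add_distrib, Finset.sum_sub_distrib, Finset.sum_const,
          ← Finset.mul_sum, ← Finset.mul_sum, hsum_inner, hsum_normsq, hΩcard,
          nsmul_eq_mul, hnormSum]
    _ = N * F x - β⁻¹ * ((N - M₁) * T) + (1/(2*β) * ((N - 2*M₁ + M₂)*T)
          + 1/(2*β) * ((M₁ - M₂)*S2/(n:ℝ)^2)) := by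
        have : (1/(n:ℝ))^2 * ((N - 2*M₁ + M₂) * ((n:ℝ)^2 * T) + (M₁ - M₂) * S2)
            = (N - 2*M₁ + M₂)*T + (M₁ - M₂)*S2/(n:ℝ)^2 := by
          field_simp
        rw [this, mul_add]
    _ ≤ N * F x - (N - M₁) * (μ / β) * (F x - fstar) + M₁ * c * σ^2 / (2*β*n) := by
        linarith [k1, k2, k3, hbb]

end Core


set_option maxHeartbeats 2000000

/-- Convergence of ErasureHead with step size `γ = (1-p)/β` on a `β`-smooth, `μ`-PL function,
when `c ≥ n ln(2)/r`: `Δ_T ≤ (1-(1-e^{-cr/n})μ/β)^T Δ_0 + 2c e^{-cr/n}σ²/(μn)`. -/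
theorem erasurehead_convergence_exp_bound_step_one_sub_p_over_beta
    {d n k c r ℓ T : ℕ} (hn : 0 < n) (hc : c ∣ n) (hrpos : 0 < r)
    (hr : r ≤ k) (hℓ : n * ℓ = k * c) (h2ℓ : 2 * ℓ ≤ k)
    (hcr : (c : ℝ) ≥ (n : ℝ) * Real.log 2 / (r : ℝ))
    (W : Fin (n / c) → Finset (Fin k))
    (hWcard : ∀ i, (W i).card = ℓ)
    (hWdisj : ∀ i j, i ≠ j → Disjoint (W i) (W j))
    (f : Fin n → EuclideanSpace ℝ (Fin d) → ℝ)
    (hdiff : ∀ i, Differentiable ℝ (f i))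
    (σ β μ fstar : ℝ) (hμ : 0 < μ) (hβμ : μ ≤ β)
    (hσ : ∀ i x, ‖gradient (f i) x‖ ≤ σ)
    (F : EuclideanSpace ℝ (Fin d) → ℝ)
    (hF : F = fun y => (1 / (n : ℝ)) * ∑ i, f i y)
    (hsmooth : ∀ x y, F y ≤ F x + inner ℝ (gradient F x) (y - x) + (β / 2) * ‖y - x‖ ^ 2)
    (hmin : ∀ x, fstar ≤ F x) (hattain : ∃ x, F x = fstar)
    (hPL : ∀ x, μ * (F x - fstar) ≤ (1 / 2) * ‖gradient F x‖ ^ 2)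
    (p : ℝ)
    (hp : p = ((k - ℓ).choose r : ℝ) / (k.choose r : ℝ))
    (x0 : EuclideanSpace ℝ (Fin d))
    (X : (ℕ → Finset (Fin k)) → ℕ → EuclideanSpace ℝ (Fin d))
    (hX : X = fun ω => traj x0 (fun S x => x - ((1 - p) / β) • ((1 - p)⁻¹ •
        ((1 / (n : ℝ)) • ∑ i : Fin (n / c),
          (if (S ∩ W i).Nonempty then (1 : ℝ) else 0) •
            ∑ j : Fin c, gradient (f (taskIdx n c hc i j)) x)) ) ω)
    (ΔT : ℝ)
    (hΔT : ΔT = (∑ ω ∈ Fintype.piFinset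
          (fun _ : Fin T => Finset.powersetCard r (Finset.univ : Finset (Fin k))),
        (F (X (fun t => if h : t < T then ω ⟨t, h⟩ else ∅) T) - fstar))
      / ((k.choose r : ℝ)) ^ T) :
    ΔT ≤ (1 - (1 - Real.exp (-(c * r : ℝ) / (n : ℝ))) * μ / β) ^ T * (F x0 - fstar)
      + 2 * c * Real.exp (-(c * r : ℝ) / (n : ℝ)) * σ ^ 2 / (μ * n) := by
  classical
  -- positivity setup
  have hβ : 0 < β := lt_of_lt_of_le hμ hβμ
  have hk : 0 < k := lt_of_lt_of_le hrpos hr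
  have hnR : (0:ℝ) < n := by exact_mod_cast hn
  have hkR : (0:ℝ) < k := by exact_mod_cast hk
  have hrR : (0:ℝ) < r := by exact_mod_cast hrpos
  have hℓk : ℓ ≤ k := by omega
  set eps := Real.exp (-(c * r : ℝ) / (n : ℝ)) with heps
  have heps0 : 0 < eps := Real.exp_pos _
  -- p ≤ eps ≤ 1/2
  have hcast : (n:ℝ) * ℓ = (k:ℝ) * c := by exact_mod_cast hℓ
  have hfrac : (ℓ:ℝ)/k = (c:ℝ)/n := by
    rw [div_eq_div_iff hkR.ne' hnR.ne']
    linear_combination hcast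
  have hexp_eq : -((ℓ:ℝ)/k) * r = -((c:ℝ) * r) / n := by
    rw [hfrac]; ring
  have hpeps : p ≤ eps := by
    rw [hp, heps]
    calc ((k - ℓ).choose r : ℝ) / (k.choose r : ℝ) ≤ Real.exp (-((ℓ : ℝ) / k) * r) :=
        choose_ratio_le_exp k ℓ r hk hr hℓk
      _ = Real.exp (-(c * r : ℝ) / (n : ℝ)) := by rw [hexp_eq]
  have hepshalf : eps ≤ 1/2 := by
    rw [heps]
    have h1 : Real.log 2 * n ≤ (c:ℝ) * r := by
      rw [ge_iff_le, div_le_iff₀ hrR] at hcr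
      nlinarith [hcr]
    have h2 : -((c:ℝ) * r) / n ≤ -Real.log 2 := by
      rw [div_le_iff₀ hnR]
      nlinarith [h1]
    calc Real.exp (-(c * r : ℝ) / (n : ℝ)) ≤ Real.exp (-Real.log 2) := Real.exp_le_exp.2 h2
      _ = 1/2 := by rw [Real.exp_neg, Real.exp_log two_pos]; norm_num
  have hp0 : 0 ≤ p := by rw [hp]; positivity
  have hphalf : p ≤ 1/2 := le_trans hpeps hepshalf
  have h1ppos : (0:ℝ) < 1 - p := by linarith
  have h1phalf : (1:ℝ)/2 ≤ 1 - p := by linarith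
  -- counts
  set Ω := Finset.powersetCard r (Finset.univ : Finset (Fin k)) with hΩdef
  have hΩcard : Ω.card = k.choose r := by
    rw [hΩdef, card_powersetCard, card_univ, Fintype.card_fin]
  have hNpos : (0:ℝ) < (k.choose r : ℝ) := by exact_mod_cast Nat.choose_pos hr
  have hNp : (k.choose r : ℝ) * p = ((k - ℓ).choose r : ℝ) := by
    rw [hp]; field_simp
  -- simplified update map
  set upd' : Finset (Fin k) → EuclideanSpace ℝ (Fin d) → EuclideanSpace ℝ (Fin d) :=
    fun S x => x - β⁻¹ • ((1 / (n : ℝ)) • ∑ i : Fin (n / c),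
      (if (S ∩ W i).Nonempty then (1 : ℝ) else 0) •
        ∑ j : Fin c, gradient (f (taskIdx n c hc i j)) x) with hupd'
  have hXeq : X = fun ω => traj x0 upd' ω := by
    rw [hX]
    have hco : ∀ (w : EuclideanSpace ℝ (Fin d)), ((1 - p) / β) • ((1 - p)⁻¹ • w) = β⁻¹ • w := by
      intro w
      rw [smul_smul, div_mul_eq_mul_div, mul_inv_cancel₀ h1ppos.ne', one_div]
    have : (fun (S : Finset (Fin k)) (x : EuclideanSpace ℝ (Fin d)) =>
          x - ((1 - p) / β) • ((1 - p)⁻¹ • ((1 / (n : ℝ)) • ∑ i : Fin (n / c),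
            (if (S ∩ W i).Nonempty then (1 : ℝ) else 0) •
              ∑ j : Fin c, gradient (f (taskIdx n c hc i j)) x))) = upd' := by
      funext S y
      rw [hco, hupd']
    rw [this]
  -- contraction and noise constants
  set ρ : ℝ := 1 - (1 - p) * μ / β with hρdef
  set ns : ℝ := p * c * σ ^ 2 / (2 * β * n) with hnsdef
  have hμβ : 0 ≤ μ / β := div_nonneg hμ.le hβ.le
  have hμβ1 : μ / β ≤ 1 := (div_le_one hβ).2 hβμ
  have hρ0 : 0 ≤ ρ := by
    rw [hρdef]
    have h1 : (1 - p) * μ / β = (1 - p) * (μ / β) := by ring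
    have h2 : (1 - p) * (μ / β) ≤ 1 * 1 :=
      mul_le_mul (by linarith) hμβ1 hμβ (by norm_num)
    rw [h1]; linarith
  have hρlt1 : ρ < 1 := by
    rw [hρdef]
    have : 0 < (1 - p) * μ / β := div_pos (mul_pos h1ppos hμ) hβ
    linarith
  have hns0 : 0 ≤ ns := by
    rw [hnsdef]
    apply div_nonneg _ (by positivity)
    have : 0 ≤ p * c := mul_nonneg hp0 (Nat.cast_nonneg c)
    positivity
  -- per-step bound
  have hstep : ∀ x, ∑ s ∈ Ω, ((fun y => F y - fstar) (upd' s x))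
      ≤ (Ω.card : ℝ) * ρ * ((fun y => F y - fstar) x) + (Ω.card : ℝ) * ns := by
    intro x
    have hcore := core_step hn hc hrpos hr hℓ h2ℓ W hWcard hWdisj f hdiff σ β μ fstar
      hμ hβμ hσ F hF hsmooth hmin hPL x
    have e0 : ∑ s ∈ Ω, ((fun y => F y - fstar) (upd' s x))
        = (∑ s ∈ Ω, F (x - β⁻¹ • ((1 / (n : ℝ)) • ∑ i : Fin (n / c),
            (if (s ∩ W i).Nonempty then (1 : ℝ) else 0) •
              ∑ j : Fin c, gradient (f (taskIdx n c hc i j)) x)))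
          - (k.choose r : ℝ) * fstar := by
      rw [Finset.sum_sub_distrib, Finset.sum_const, hΩcard, nsmul_eq_mul]
    have e1 : (Ω.card : ℝ) * ρ * (F x - fstar) + (Ω.card : ℝ) * ns
        = ((k.choose r : ℝ) * F x
            - ((k.choose r : ℝ) - ((k - ℓ).choose r : ℝ)) * (μ / β) * (F x - fstar)
            + ((k - ℓ).choose r : ℝ) * c * σ ^ 2 / (2 * β * n))
          - (k.choose r : ℝ) * fstar := by
      rw [hΩcard, hρdef, hnsdef]
      linear_combination ((μ/β) * (F x - fstar) + (c:ℝ) * σ^2 / (2*β*n)) * hNp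
    rw [e0]
    show _ - _ ≤ (Ω.card : ℝ) * ρ * (F x - fstar) + (Ω.card : ℝ) * ns
    rw [e1]
    have := hcore
    linarith
  have hsum := stepSum_le Ω upd' (fun y => F y - fstar) ρ ns hρ0 hns0 hstep T x0
  have htraj : (∑ ω ∈ Fintype.piFinset
        (fun _ : Fin T => Finset.powersetCard r (Finset.univ : Finset (Fin k))),
      (F (traj x0 upd' (fun t => if h : t < T then ω ⟨t, h⟩ else ∅) T) - fstar))
      = stepSum Ω upd' (fun y => F y - fstar) T x0 :=
    sum_piFinset_traj Ω upd' (fun y => F y - fstar) T x0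
  rw [hΔT, hXeq]
  show (∑ ω ∈ Fintype.piFinset
        (fun _ : Fin T => Finset.powersetCard r (Finset.univ : Finset (Fin k))),
      (F (traj x0 upd' (fun t => if h : t < T then ω ⟨t, h⟩ else ∅) T) - fstar))
      / ((k.choose r : ℝ)) ^ T ≤ _
  rw [htraj]
  have hpow : (0:ℝ) < ((k.choose r : ℝ)) ^ T := pow_pos hNpos T
  rw [div_le_iff₀ hpow]
  have hΔ0 : 0 ≤ F x0 - fstar := sub_nonneg.2 (hmin x0)
  have hρρ' : ρ ≤ 1 - (1 - eps) * μ / β := by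
    rw [hρdef]
    have h1 : (1 - eps) * μ ≤ (1 - p) * μ := by nlinarith [hpeps, hμ]
    have h2 : (1 - eps) * μ / β ≤ (1 - p) * μ / β := div_le_div_of_nonneg_right h1 hβ.le
    linarith
  have hgeom : ∑ i ∈ Finset.range T, ρ ^ i ≤ 1 / (1 - ρ) := by
    rw [geom_sum_eq (ne_of_lt hρlt1)]
    have e2 : (ρ ^ T - 1) / (ρ - 1) = (1 - ρ ^ T) / (1 - ρ) := by
      rw [← neg_div_neg_eq]; ring_nf
    rw [e2]
    exact (div_le_div_iff_of_pos_right (by linarith : (0:ℝ) < 1 - ρ)).2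
      (by nlinarith [pow_nonneg hρ0 T])
  calc stepSum Ω upd' (fun y => F y - fstar) T x0
      ≤ (Ω.card : ℝ) ^ T * (ρ ^ T * (F x0 - fstar) + ns * ∑ i ∈ Finset.range T, ρ ^ i) := hsum
    _ = (ρ ^ T * (F x0 - fstar) + ns * ∑ i ∈ Finset.range T, ρ ^ i) * ((k.choose r:ℝ)) ^ T := by
        rw [hΩcard, mul_comm]
    _ ≤ ((1 - (1 - eps) * μ / β) ^ T * (F x0 - fstar) + 2 * c * eps * σ ^ 2 / (μ * n))
          * ((k.choose r:ℝ)) ^ T := by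
        apply mul_le_mul_of_nonneg_right _ hpow.le
        have h1 : ρ ^ T * (F x0 - fstar) ≤ (1 - (1 - eps) * μ / β) ^ T * (F x0 - fstar) :=
          mul_le_mul_of_nonneg_right (pow_le_pow_left₀ hρ0 hρρ' T) hΔ0
        have h2 : ns * ∑ i ∈ Finset.range T, ρ ^ i ≤ ns * (1/(1-ρ)) :=
          mul_le_mul_of_nonneg_left hgeom hns0
        have h3 : ns * (1/(1-ρ)) ≤ 2 * c * eps * σ ^ 2 / (μ * n) := by
          have e5 : ns * (1/(1-ρ)) = (p * c * σ^2 * β) / ((2*β*n) * ((1-p)*μ)) := by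
            rw [hnsdef, hρdef, show (1:ℝ) - (1 - (1-p)*μ/β) = ((1-p)*μ)/β by ring,
              one_div_div, div_mul_div_comm]
          rw [e5, div_le_div_iff₀ (mul_pos (by positivity) (mul_pos h1ppos hμ))
            (mul_pos hμ hnR)]
          have hq : p ≤ 4 * eps * (1 - p) := by nlinarith [hpeps, h1phalf, heps0.le]
          have hmm := mul_le_mul_of_nonneg_right hq
            (show (0:ℝ) ≤ (c:ℝ) * σ^2 * β * (μ * n) by positivity)
          nlinarith [hmm]
        linarith
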